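/- Let M be a continuous strictly increasing bijection of [0,∞) and let β₀, β₁ ∈ (0,∞) satisfy β₀ < α₀(M) and α₁(M) < β₁ (for the indices α₀, α₁ defined via suprema/infima of M(λt)/(M(λ)t^r) over λ ∈ (0,1], t ∈ (0,t₀]). Then there exist a continuous strictly increasing bijection N of [0,∞), equivalent to M at zero with N(1) = 1, and t₀ ∈ (0,1], such that N(λ)t^{β₁} ≤ N(λt) ≤ N(λ)t^{β₀} for all λ ∈ (0,1] and t ∈ (0,t₀]. Moreover, if M is convex then N may be chosen convex, and if M is concave then N may be chosen concave. -/

import Mathlib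

open Set
open scoped ENNReal

/-- `M` belongs to the class `𝓕` of continuous strictly increasing bijections of `[0,∞)`. -/
def MemFcal (M : ℝ → ℝ) : Prop :=
  ContinuousOn M (Ici 0) ∧ StrictMonoOn M (Ici 0) ∧ BijOn M (Ici 0) (Ici 0)

/-- `M ∼ N`: equivalence at zero. -/
def EquivAtZero (M N : ℝ → ℝ) : Prop :=
  ∃ c₀ c₁ t₀ : ℝ, 0 < c₀ ∧ 0 < c₁ ∧ 0 < t₀ ∧
    ∀ t ∈ Icc (0 : ℝ) t₀, c₀⁻¹ * N (c₁⁻¹ * t) ≤ M t ∧ M t ≤ c₀ * N (c₁ * t)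

def S0 (M : ℝ → ℝ) (t₀ : ℝ) : Set ℝ :=
  {r | 0 < r ∧ ∃ C : ℝ, ∀ l ∈ Ioc (0 : ℝ) 1, ∀ t ∈ Ioc (0 : ℝ) t₀,
    M (l * t) ≤ C * (M l * t ^ r)}

def S1 (M : ℝ → ℝ) (t₀ : ℝ) : Set ℝ :=
  {r | 0 < r ∧ ∃ c : ℝ, 0 < c ∧ ∀ l ∈ Ioc (0 : ℝ) 1, ∀ t ∈ Ioc (0 : ℝ) t₀,
    c * (M l * t ^ r) ≤ M (l * t)}

noncomputable def alpha0 (M : ℝ → ℝ) (t₀ : ℝ) : ℝ≥0∞ :=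
  ⨆ r ∈ S0 M t₀, ENNReal.ofReal r

noncomputable def alpha1 (M : ℝ → ℝ) (t₀ : ℝ) : ℝ≥0∞ :=
  ⨅ r ∈ S1 M t₀, ENNReal.ofReal r

noncomputable def alpha0' (M : ℝ → ℝ) : ℝ≥0∞ := ⨆ t₀ ∈ Ioc (0 : ℝ) 1, alpha0 M t₀

noncomputable def alpha1' (M : ℝ → ℝ) : ℝ≥0∞ := ⨅ t₀ ∈ Ioc (0 : ℝ) 1, alpha1 M t₀

/-- given `β₀ < α₀(M)` and `α₁(M) < β₁`, there are `N ∈ 𝓕` equivalent to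
`M` at zero with `N(1)=1` and `t₀ ∈ (0,1]` such that
`N(λ)t^{β₁} ≤ N(λt) ≤ N(λ)t^{β₀}` for `λ ∈ (0,1]`, `t ∈ (0,t₀]`; moreover `N` can be
chosen convex if `M` is convex and concave if `M` is concave. -/
theorem power_bounds_equivalent_function
    (M : ℝ → ℝ) (hM : MemFcal M) (β₀ β₁ : ℝ) (hβ₀pos : 0 < β₀) (hβ₁pos : 0 < β₁)
    (hβ₀ : ENNReal.ofReal β₀ < alpha0' M) (hβ₁ : alpha1' M < ENNReal.ofReal β₁) :
    ∃ (N : ℝ → ℝ) (t₀ : ℝ), MemFcal N ∧ EquivAtZero N M ∧ N 1 = 1 ∧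
      0 < t₀ ∧ t₀ ≤ 1 ∧
      (∀ l ∈ Ioc (0 : ℝ) 1, ∀ t ∈ Ioc (0 : ℝ) t₀,
        N l * t ^ β₁ ≤ N (l * t) ∧ N (l * t) ≤ N l * t ^ β₀) ∧
      (ConvexOn ℝ (Ici 0) M → ConvexOn ℝ (Ici 0) N) ∧
      (ConcaveOn ℝ (Ici 0) M → ConcaveOn ℝ (Ici 0) N) := by

  obtain ⟨hcont, hmono, hmaps, hinj, hsurj⟩ :
      ContinuousOn M (Ici 0) ∧ StrictMonoOn M (Ici 0) ∧ MapsTo M (Ici 0) (Ici 0) ∧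
        InjOn M (Ici 0) ∧ SurjOn M (Ici 0) (Ici 0) := by
    obtain ⟨h1, h2, h3, h4, h5⟩ := hM
    exact ⟨h1, h2, h3, h4, h5⟩
  -- M 0 = 0
  have hM0 : M 0 = 0 := by
    obtain ⟨s, hs, hMs⟩ := hsurj (le_refl (0:ℝ))
    rcases eq_or_lt_of_le (mem_Ici.mp hs) with h | h
    · rw [← h] at hMs; exact hMs
    · have := hmono (le_refl (0:ℝ)) hs h
      have h0 := hmaps (le_refl (0:ℝ))
      simp only [mem_Ici] at h0
      rw [hMs] at this
      linarith
  have hM1 : 0 < M 1 := by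
    have := hmono (le_refl (0:ℝ)) (by norm_num : (1:ℝ) ∈ Ici (0:ℝ)) one_pos
    rwa [hM0] at this
  have hMpos : ∀ l : ℝ, 0 < l → 0 < M l := by
    intro l hl
    have := hmono (le_refl (0:ℝ)) (le_of_lt hl) hl
    rwa [hM0] at this
  -- extract from hβ₀
  rw [alpha0'] at hβ₀
  rw [lt_iSup_iff] at hβ₀
  obtain ⟨tA, hβ₀⟩ := hβ₀
  rw [lt_iSup_iff] at hβ₀
  obtain ⟨htA, hβ₀⟩ := hβ₀
  rw [alpha0, lt_iSup_iff] at hβ₀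
  obtain ⟨r₀, hβ₀⟩ := hβ₀
  rw [lt_iSup_iff] at hβ₀
  obtain ⟨hr₀S, hβ₀⟩ := hβ₀
  obtain ⟨hr₀pos, C, hC⟩ := hr₀S
  have hβ₀r : β₀ < r₀ := (ENNReal.ofReal_lt_ofReal_iff hr₀pos).mp hβ₀
  -- extract from hβ₁
  rw [alpha1'] at hβ₁
  rw [iInf_lt_iff] at hβ₁
  obtain ⟨tB, hβ₁⟩ := hβ₁
  rw [iInf_lt_iff] at hβ₁
  obtain ⟨htB, hβ₁⟩ := hβ₁
  rw [alpha1, iInf_lt_iff] at hβ₁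
  obtain ⟨r₁, hβ₁⟩ := hβ₁
  rw [iInf_lt_iff] at hβ₁
  obtain ⟨hr₁S, hβ₁⟩ := hβ₁
  obtain ⟨hr₁pos, c, hcpos, hc⟩ := hr₁S
  have hr₁β : r₁ < β₁ := (ENNReal.ofReal_lt_ofReal_iff hβ₁pos).mp hβ₁
  -- C is positive
  have hCpos : 0 < C := by
    have h1 := hC 1 (by constructor <;> norm_num) tA ⟨htA.1, le_refl tA⟩
    have hlt : 0 < M (1 * tA) := hMpos _ (by simpa using htA.1)
    have hbase : 0 < M 1 * tA ^ r₀ := mul_pos hM1 (Real.rpow_pos_of_pos htA.1 _)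
    nlinarith
  have hδ₀ : 0 < r₀ - β₀ := by linarith
  have hδ₁ : 0 < β₁ - r₁ := by linarith
  set ε₀ : ℝ := C⁻¹ ^ (r₀ - β₀)⁻¹ with hε₀def
  set ε₁ : ℝ := c ^ (β₁ - r₁)⁻¹ with hε₁def
  have hε₀pos : 0 < ε₀ := Real.rpow_pos_of_pos (by positivity) _
  have hε₁pos : 0 < ε₁ := Real.rpow_pos_of_pos hcpos _
  set t₀ : ℝ := min 1 (min (min tA tB) (min ε₀ ε₁)) with ht₀def
  have ht₀pos : 0 < t₀ := by
    apply lt_min one_pos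
    exact lt_min (lt_min htA.1 htB.1) (lt_min hε₀pos hε₁pos)
  have ht₀le1 : t₀ ≤ 1 := min_le_left _ _
  have ht₀A : t₀ ≤ tA := le_trans (le_trans (min_le_right _ _) (min_le_left _ _)) (min_le_left _ _)
  have ht₀B : t₀ ≤ tB := le_trans (le_trans (min_le_right _ _) (min_le_left _ _)) (min_le_right _ _)
  have ht₀ε₀ : t₀ ≤ ε₀ := le_trans (le_trans (min_le_right _ _) (min_le_right _ _)) (min_le_left _ _)
  have ht₀ε₁ : t₀ ≤ ε₁ := le_trans (le_trans (min_le_right _ _) (min_le_right _ _)) (min_le_right _ _)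
  refine ⟨fun t => M t / M 1, t₀, ?_, ?_, ?_, ht₀pos, ht₀le1, ?_, ?_, ?_⟩
  · -- MemFcal
    refine ⟨hcont.div_const _, ?_, ?_, ?_, ?_⟩
    · intro a ha b hb hab
      exact div_lt_div_of_pos_right (hmono ha hb hab) hM1
    · intro t ht
      have := hmaps ht
      simp only [mem_Ici] at this ⊢
      positivity
    · intro a ha b hb hab
      have := hinj ha hb
      apply this
      field_simp at hab
      exact hab
    · intro y hy
      simp only [mem_Ici] at hy
      obtain ⟨t, ht, hMt⟩ := hsurj (mem_Ici.mpr (show (0:ℝ) ≤ y * M 1 by positivity))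
      refine ⟨t, ht, ?_⟩
      show M t / M 1 = y
      rw [hMt]
      field_simp
  · -- EquivAtZero
    refine ⟨max (M 1) (M 1)⁻¹, 1, 1, lt_max_of_lt_left hM1, one_pos, one_pos, ?_⟩
    intro t ht
    have hMt : 0 ≤ M t := hmaps (mem_Ici.mpr ht.1)
    simp only [inv_one, one_mul]
    constructor
    · show (max (M 1) (M 1)⁻¹)⁻¹ * M t ≤ M t / M 1
      rw [div_eq_inv_mul]
      apply mul_le_mul_of_nonneg_right _ hMt
      apply inv_anti₀ hM1 (le_max_left _ _)
    · show M t / M 1 ≤ max (M 1) (M 1)⁻¹ * M t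
      rw [div_eq_inv_mul]
      exact mul_le_mul_of_nonneg_right (le_max_right _ _) hMt
  · exact div_self (ne_of_gt hM1)
  · -- main inequality
    intro l hl t ht
    have hlpos := hl.1
    have htpos := ht.1
    have hMl : 0 < M l := hMpos l hlpos
    have key : M l * t ^ β₁ ≤ M (l * t) ∧ M (l * t) ≤ M l * t ^ β₀ := by
      constructor
      · have h1 := hc l hl t ⟨htpos, le_trans ht.2 ht₀B⟩
        have h2 : t ^ β₁ ≤ c * t ^ r₁ := by
          have : t ^ (β₁ - r₁) ≤ ε₁ ^ (β₁ - r₁) :=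
            Real.rpow_le_rpow (le_of_lt htpos) (le_trans ht.2 ht₀ε₁) (le_of_lt hδ₁)
          have heq : ε₁ ^ (β₁ - r₁) = c := by
            rw [hε₁def, ← Real.rpow_mul hcpos.le, inv_mul_cancel₀ (ne_of_gt hδ₁),
              Real.rpow_one]
          rw [heq] at this
          calc t ^ β₁ = t ^ (β₁ - r₁) * t ^ r₁ := by
                rw [← Real.rpow_add htpos]; ring_nf
            _ ≤ c * t ^ r₁ :=
                mul_le_mul_of_nonneg_right this (Real.rpow_nonneg htpos.le _)
        calc M l * t ^ β₁ ≤ M l * (c * t ^ r₁) :=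
              mul_le_mul_of_nonneg_left h2 (le_of_lt hMl)
          _ = c * (M l * t ^ r₁) := by ring
          _ ≤ M (l * t) := h1
      · have h1 := hC l hl t ⟨htpos, le_trans ht.2 ht₀A⟩
        have h2 : C * t ^ r₀ ≤ t ^ β₀ := by
          have hle : t ^ (r₀ - β₀) ≤ ε₀ ^ (r₀ - β₀) :=
            Real.rpow_le_rpow htpos.le (le_trans ht.2 ht₀ε₀) hδ₀.le
          have heq : ε₀ ^ (r₀ - β₀) = C⁻¹ := by
            rw [hε₀def, ← Real.rpow_mul (by positivity), inv_mul_cancel₀ (ne_of_gt hδ₀),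
              Real.rpow_one]
          rw [heq] at hle
          have hsplit : t ^ r₀ = t ^ (r₀ - β₀) * t ^ β₀ := by
            rw [← Real.rpow_add htpos]; ring_nf
          calc C * t ^ r₀ = (C * t ^ (r₀ - β₀)) * t ^ β₀ := by rw [hsplit]; ring
            _ ≤ (C * C⁻¹) * t ^ β₀ := by
                apply mul_le_mul_of_nonneg_right _ (Real.rpow_nonneg htpos.le _)
                exact mul_le_mul_of_nonneg_left hle hCpos.le
            _ = t ^ β₀ := by rw [mul_inv_cancel₀ (ne_of_gt hCpos), one_mul]
        calc M (l * t) ≤ C * (M l * t ^ r₀) := h1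
          _ = M l * (C * t ^ r₀) := by ring
          _ ≤ M l * t ^ β₀ := mul_le_mul_of_nonneg_left h2 (le_of_lt hMl)
    constructor
    · show M l / M 1 * t ^ β₁ ≤ M (l * t) / M 1
      rw [div_mul_eq_mul_div]
      gcongr
      exact key.1
    · show M (l * t) / M 1 ≤ M l / M 1 * t ^ β₀
      rw [div_mul_eq_mul_div]
      gcongr
      exact key.2
  · intro hconv
    have : (fun t => M t / M 1) = fun t => (M 1)⁻¹ • M t := by
      funext t; simp [div_eq_inv_mul, smul_eq_mul]
    rw [this]
    exact hconv.smul (by positivity)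
  · intro hconc
    have : (fun t => M t / M 1) = fun t => (M 1)⁻¹ • M t := by
      funext t; simp [div_eq_inv_mul, smul_eq_mul]
    rw [this]
    exact hconc.smul (by positivity)
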